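/- Let a and b be distinct constants, D = {R(a,b)} for a binary predicate R, and Σ the singleton set consisting of the linear (non-simple) TGD R(x,x) → ∃z R(z,x). Then there is no trigger for Σ on D, so chase(D,Σ) = D is finite; yet Σ is not D-weakly-acyclic. In particular, the equivalence between finiteness of the semi-oblivious chase and D-weak-acyclicity fails for linear TGDs that are not simple-linear. -/
import Mathlib


/-! ## A framework for existential rules (TGDs)and the semi-oblivious chase

Constants and variables are both modelled by `ℕ` (two disjoint countably
infinite sets, used in disjoint roles), labeled nulls are modelled by the
inductive type `GTerm.null`.  Atoms carry a predicate symbol from an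
arbitrary type `P` and a list of arguments; positions of a predicate are
pairs `(R, i)` with a 0-based index `i`. -/

/-- An atom: a predicate symbol from `P` applied to a list of arguments from `τ`.
For facts/databases the arguments are constants (`ℕ`); in TGDs they are
variables (`ℕ`); in instances they are ground terms. -/
structure Atom (P : Type) (τ : Type) where
  pred : P
  args : List τ

/-- Apply a substitution to the arguments of an atom. -/
def Atom.map {P τ τ' : Type} (f : τ → τ') (a : Atom P τ) : Atom P τ' :=
  ⟨a.pred, a.args.map f⟩

/-- A TGD `∀x̄∀ȳ (φ(x̄,ȳ) → ∃z̄ ψ(x̄,z̄))`: constant-free, with variables drawn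
from `ℕ` and non-empty body and head (conjunctions of atoms as lists). -/
structure TGD (P : Type) where
  body : List (Atom P ℕ)
  head : List (Atom P ℕ)
  body_ne : body ≠ []
  head_ne : head ≠ []

/-- The set of variables occurring in a list of atoms. -/
def varsOf {P : Type} (A : List (Atom P ℕ)) : Set ℕ := {v | ∃ a ∈ A, v ∈ a.args}

/-- The frontier of a TGD: the variables occurring both in body and head. -/
def TGD.frontier {P : Type} (σ : TGD P) : Set ℕ := varsOf σ.body ∩ varsOf σ.head

/-- The existentially quantified variables of a TGD: head variables not in the body. -/
def TGD.existVars {P : Type} (σ : TGD P) : Set ℕ := varsOf σ.head \ varsOf σ.body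

/-- A TGD is linear if its body consists of a single atom. -/
def TGD.Linear {P : Type} (σ : TGD P) : Prop := ∃ a : Atom P ℕ, σ.body = [a]

/-- A linear TGD is simple-linear if moreover no variable occurs more than once
in its body atom. -/
def TGD.SimpleLinear {P : Type} (σ : TGD P) : Prop :=
  ∃ a : Atom P ℕ, σ.body = [a] ∧ a.args.Nodup

/-- Ground terms: constants from `ℕ`, or labeled nulls `⊥^x_{σ,g}` uniquely
determined by a TGD `σ`, a (frontier) assignment `g`, and a variable `x`. -/
inductive GTerm (P : Type) : Type
  | const : ℕ → GTerm P
  | null : TGD P → (ℕ → GTerm P) → ℕ → GTerm P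

/-- `h` is a homomorphism from the (constant-free) atoms `A` into the set of
atoms `I` (being a substitution on variables, it is the identity on constants). -/
def IsHom {P τ τ' : Type} (h : τ → τ') (A : List (Atom P τ)) (I : Set (Atom P τ')) : Prop :=
  ∀ a ∈ A, a.map h ∈ I

open Classical in
/-- The restriction `h|fr(σ)` of `h` to the frontier of `σ`
(a fixed default value elsewhere). -/
noncomputable def frRestrict {P : Type} (σ : TGD P) (h : ℕ → GTerm P) : ℕ → GTerm P :=
  fun v => if v ∈ σ.frontier then h v else GTerm.const 0

open Classical in
/-- The substitution `μ` of a trigger `(σ,h)`: it agrees with `h` on the frontier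
variables and sends each other (existentially quantified) variable `x` to the
labeled null `⊥^x_{σ,h|fr(σ)}`. -/
noncomputable def triggerSubst {P : Type} (σ : TGD P) (h : ℕ → GTerm P) : ℕ → GTerm P :=
  fun x => if x ∈ σ.frontier then h x else GTerm.null σ (frRestrict σ h) x

/-- The result of a trigger: `result(σ,h) = μ(head(σ))`. -/
noncomputable def triggerResult {P : Type} (σ : TGD P) (h : ℕ → GTerm P) :
    Set (Atom P (GTerm P)) :=
  {ga | ∃ a ∈ σ.head, ga = a.map (triggerSubst σ h)}

/-- A database viewed as an instance (constants as ground terms). -/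
def dbInst {P : Type} (D : Set (Atom P ℕ)) : Set (Atom P (GTerm P)) :=
  {ga | ∃ a ∈ D, ga = a.map GTerm.const}

/-- `chase^i(D,Σ)`: the `i`-th level of the semi-oblivious chase. -/
noncomputable def chaseN {P : Type} (D : Set (Atom P ℕ)) (Sgm : Set (TGD P)) :
    ℕ → Set (Atom P (GTerm P))
  | 0 => dbInst D
  | i + 1 => chaseN D Sgm i ∪
      {ga | ∃ σ ∈ Sgm, ∃ h : ℕ → GTerm P,
        IsHom h σ.body (chaseN D Sgm i) ∧ ga ∈ triggerResult σ h}

/-- The semi-oblivious chase: `chase(D,Σ) = ⋃ i, chase^i(D,Σ)`. -/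
noncomputable def chase {P : Type} (D : Set (Atom P ℕ)) (Sgm : Set (TGD P)) :
    Set (Atom P (GTerm P)) := ⋃ i, chaseN D Sgm i

/-- An instance `I` satisfies a TGD `σ`: every homomorphism from the body into `I`
extends (on the frontier) to a homomorphism from the head into `I`. -/
def SatisfiesTGD {P : Type} (I : Set (Atom P (GTerm P))) (σ : TGD P) : Prop :=
  ∀ h : ℕ → GTerm P, IsHom h σ.body I →
    ∃ h' : ℕ → GTerm P, (∀ x ∈ σ.frontier, h' x = h x) ∧ IsHom h' σ.head I

/-- Variable `x` occurs at position `π = (R,i)` in the body of `σ`. -/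
def bodyPosOf {P : Type} (σ : TGD P) (x : ℕ) (π : P × ℕ) : Prop :=
  ∃ a ∈ σ.body, a.pred = π.1 ∧ a.args[π.2]? = some x

/-- Variable `x` occurs at position `π = (R,i)` in the head of `σ`. -/
def headPosOf {P : Type} (σ : TGD P) (x : ℕ) (π : P × ℕ) : Prop :=
  ∃ a ∈ σ.head, a.pred = π.1 ∧ a.args[π.2]? = some x

/-- The normal edges of the dependency graph `dg(Σ)`: from a body position of a
frontier variable `x` of some `σ ∈ Σ` to a head position of `x`. -/
def normalEdge {P : Type} (Sgm : Set (TGD P)) (π π' : P × ℕ) : Prop :=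
  ∃ σ ∈ Sgm, ∃ x ∈ σ.frontier, bodyPosOf σ x π ∧ headPosOf σ x π'

/-- The special edges of `dg(Σ)`: from a body position of a frontier variable of
some `σ ∈ Σ` to a head position of an existentially quantified variable of `σ`. -/
def specialEdge {P : Type} (Sgm : Set (TGD P)) (π π' : P × ℕ) : Prop :=
  ∃ σ ∈ Sgm, (∃ x ∈ σ.frontier, bodyPosOf σ x π) ∧ ∃ z ∈ σ.existVars, headPosOf σ z π'

/-- An edge of `dg(Σ)`: normal or special. -/
def depEdge {P : Type} (Sgm : Set (TGD P)) (π π' : P × ℕ) : Prop :=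
  normalEdge Sgm π π' ∨ specialEdge Sgm π π'

/-- Predicate `Q` is reachable from predicate `R` w.r.t. `Σ`: either `R = Q` or
there is a path in `dg(Σ)` from a position of `R` to a position of `Q`. -/
def reachPred {P : Type} (Sgm : Set (TGD P)) (R Q : P) : Prop :=
  R = Q ∨ ∃ i j : ℕ, Relation.ReflTransGen (depEdge Sgm) (R, i) (Q, j)

/-- `l` is a (not necessarily simple) cycle, i.e. a closed walk, in `dg(Σ)`
containing a special edge. -/
def IsCycleWithSpecial {P : Type} (Sgm : Set (TGD P)) (l : List (P × ℕ)) : Prop :=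
  2 ≤ l.length ∧ List.Chain' (depEdge Sgm) l ∧ l.head? = l.getLast? ∧
    ∃ k : ℕ, ∃ π π' : P × ℕ, l[k]? = some π ∧ l[k + 1]? = some π' ∧ specialEdge Sgm π π'

/-- The path `l` in `dg(Σ)` is `D`-supported: some atom `R(t̄) ∈ D` and some node
`(P,i)` on `l` are such that `P` is reachable from `R` w.r.t. `Σ`. -/
def SupportedBy {P : Type} (Sgm : Set (TGD P)) (D : Set (Atom P ℕ))
    (l : List (P × ℕ)) : Prop :=
  ∃ a ∈ D, ∃ π ∈ l, reachPred Sgm a.pred π.1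

/-- `Σ` is `D`-weakly-acyclic: no `D`-supported cycle in `dg(Σ)` has a special edge. -/
def DWeaklyAcyclic {P : Type} (D : Set (Atom P ℕ)) (Sgm : Set (TGD P)) : Prop :=
  ¬ ∃ l : List (P × ℕ), IsCycleWithSpecial Sgm l ∧ SupportedBy Sgm D l

/-- `Σ` is weakly-acyclic: no cycle in `dg(Σ)` has a special edge. -/
def WeaklyAcyclic {P : Type} (Sgm : Set (TGD P)) : Prop :=
  ¬ ∃ l : List (P × ℕ), IsCycleWithSpecial Sgm l

/-- The non-simple linear TGD `R(x,x) → ∃z R(z,x)` over a single binary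
predicate (variables: `x = 0`, `z = 1`). -/
def tgd15 : TGD Unit :=
  ⟨[⟨(), [0, 0]⟩], [⟨(), [1, 0]⟩], List.cons_ne_nil _ _, List.cons_ne_nil _ _⟩

/-- For distinct constants `a, b`, with `D = {R(a,b)}` and
`Σ = {R(x,x) → ∃z R(z,x)}`: there is no trigger for `Σ` on `D`, so
`chase(D,Σ) = D` is finite, yet `Σ` is not `D`-weakly-acyclic.  In particular,
the equivalence between finiteness of the semi-oblivious chase and
`D`-weak-acyclicity fails for linear TGDs that are not simple-linear. -/

lemma no_hom15 (a b : ℕ) (hab : a ≠ b) :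
    ∀ h : ℕ → GTerm Unit,
      ¬ IsHom h tgd15.body (dbInst ({⟨(), [a, b]⟩} : Set (Atom Unit ℕ))) := by
  intro h hh
  have := hh ⟨(), [0, 0]⟩ (by simp [tgd15])
  obtain ⟨a', ha', heq⟩ := this
  simp only [Set.mem_singleton_iff] at ha'
  subst ha'
  simp [Atom.map] at heq
  obtain ⟨h1, h2⟩ := heq
  rw [h1] at h2
  injection h2 with h3
  exact hab h3

lemma chaseN15 (a b : ℕ) (hab : a ≠ b) (n : ℕ) :
    chaseN ({⟨(), [a, b]⟩} : Set (Atom Unit ℕ)) ({tgd15} : Set (TGD Unit)) n =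
      dbInst ({⟨(), [a, b]⟩} : Set (Atom Unit ℕ)) := by
  induction n with
  | zero => rfl
  | succ i ih =>
    rw [chaseN, ih]
    apply Set.union_eq_self_of_subset_right
    rintro ga ⟨σ, hσ, h, hhom, -⟩
    simp only [Set.mem_singleton_iff] at hσ
    subst hσ
    exact absurd hhom (no_hom15 a b hab h)

lemma frontier15 : (0 : ℕ) ∈ tgd15.frontier := by
  constructor
  · exact ⟨⟨(), [0, 0]⟩, by simp [tgd15]⟩
  · exact ⟨⟨(), [1, 0]⟩, by simp [tgd15]⟩

lemma exist15 : (1 : ℕ) ∈ tgd15.existVars := by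
  constructor
  · exact ⟨⟨(), [1, 0]⟩, by simp [tgd15]⟩
  · rintro ⟨at1, hat, hmem⟩
    simp [tgd15] at hat
    subst hat
    simp at hmem

lemma special15 : specialEdge ({tgd15} : Set (TGD Unit)) ((), 0) ((), 0) := by
  refine ⟨tgd15, rfl, ⟨0, frontier15, ⟨⟨(), [0, 0]⟩, by simp [tgd15], rfl, rfl⟩⟩,
    ⟨1, exist15, ⟨⟨(), [1, 0]⟩, by simp [tgd15], rfl, rfl⟩⟩⟩

theorem statement15 (a b : ℕ) (hab : a ≠ b) :
    (¬ ∃ σ ∈ ({tgd15} : Set (TGD Unit)), ∃ h : ℕ → GTerm Unit,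
        IsHom h σ.body (dbInst ({⟨(), [a, b]⟩} : Set (Atom Unit ℕ)))) ∧
      chase ({⟨(), [a, b]⟩} : Set (Atom Unit ℕ)) ({tgd15} : Set (TGD Unit)) =
        dbInst ({⟨(), [a, b]⟩} : Set (Atom Unit ℕ)) ∧
      (chase ({⟨(), [a, b]⟩} : Set (Atom Unit ℕ))
        ({tgd15} : Set (TGD Unit))).Finite ∧
      ¬ DWeaklyAcyclic ({⟨(), [a, b]⟩} : Set (Atom Unit ℕ))
        ({tgd15} : Set (TGD Unit)) := by
  have hchase : chase ({⟨(), [a, b]⟩} : Set (Atom Unit ℕ)) ({tgd15} : Set (TGD Unit)) =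
      dbInst ({⟨(), [a, b]⟩} : Set (Atom Unit ℕ)) := by
    apply Set.eq_of_subset_of_subset
    · intro x hx
      obtain ⟨s, ⟨i, rfl⟩, hx⟩ := hx
      simp only at hx
      rwa [chaseN15 a b hab] at hx
    · intro x hx
      exact Set.mem_iUnion.2 ⟨0, hx⟩
  refine ⟨?_, hchase, ?_, ?_⟩
  · rintro ⟨σ, hσ, h, hhom⟩
    simp only [Set.mem_singleton_iff] at hσ
    subst hσ
    exact no_hom15 a b hab h hhom
  · rw [hchase]
    have : dbInst ({⟨(), [a, b]⟩} : Set (Atom Unit ℕ)) =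
        {(⟨(), [a, b]⟩ : Atom Unit ℕ).map GTerm.const} := by
      ext x
      simp [dbInst]
    rw [this]; exact Set.finite_singleton _
  · intro hwa
    apply hwa
    refine ⟨[((), 0), ((), 0)], ⟨by simp, ?_, by simp, 0, ((), 0), ((), 0), rfl, rfl,
      special15⟩, ⟨(), [a, b]⟩, rfl, ((), 0), by simp, Or.inl rfl⟩
    exact List.isChain_cons_cons.2 ⟨Or.inr special15, List.isChain_singleton _⟩
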